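/- For ν-a.e. x ∈ B there exists a point x' ∈ B with x' ≾ x and x' ≠ x. Consequently, for ν-a.e. x ∈ B there are infinitely many points x' ∈ B with x' ≾ x. -/

import Mathlib

open MeasureTheory
open scoped ENNReal

/-- The first return time of `x` to `B` under `g` (the smallest `n ≥ 1`
with `g^[n] x ∈ B`; junk value `0` if there is no return). -/
noncomputable def firstRetTime {X : Type*} (g : X → X) (B : Set X) (x : X) : ℕ :=
  sInf {n : ℕ | 1 ≤ n ∧ g^[n] x ∈ B}

/-- The first return map `g_B` of `g` on `B`. -/
noncomputable def firstRetMap {X : Type*} (g : X → X) (B : Set X) (x : X) : X :=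
  g^[firstRetTime g B x] x

/-- The partial order `x₁ ≺ x₂`: `x₂` is an image of `x₁` under iterates of
the first return map `g_B`. -/
def precRel {X : Type*} (g : X → X) (B : Set X) (x₁ x₂ : X) : Prop :=
  ∃ n : ℕ, (firstRetMap g B)^[n] x₁ = x₂

/-- The forward orbit `O⁺(x)` of `x` under `g̃`. -/
def fwdOrbit {X : Type*} (gt : X → X) (x : X) : Set X :=
  {y | ∃ k : ℕ, gt^[k] x = y}

/-- The equivalence relation `x₁ ∼ x₂`: the forward `g̃`-orbits of `x₁` and
`x₂` intersect. -/
def simRel {X : Type*} (gt : X → X) (x₁ x₂ : X) : Prop :=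
  (fwdOrbit gt x₁ ∩ fwdOrbit gt x₂).Nonempty

/-- `x₁ ≾ x₂` iff `x₁ ≺ x₂` and `x₁ ∼ x₂`. -/
def precsim {X : Type*} (g : X → X) (B : Set X) (gt : X → X) (x₁ x₂ : X) : Prop :=
  precRel g B x₁ x₂ ∧ simRel gt x₁ x₂

namespace Stmt5
variable {X : Type*}

/-- integer power of an equiv, as a function -/
def zp (e : X ≃ X) (c : ℤ) : X → X := ⇑((e : Equiv.Perm X) ^ c)

lemma zp_add (e : X ≃ X) (a b : ℤ) (x : X) : zp e (a + b) x = zp e a (zp e b x) := by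
  simp [zp, zpow_add, Equiv.Perm.mul_apply]

lemma zp_zero (e : X ≃ X) (x : X) : zp e 0 x = x := by simp [zp]

lemma zp_natCast (e : X ≃ X) (n : ℕ) (x : X) : zp e (n : ℤ) x = e^[n] x := by
  simp [zp, zpow_natCast]
  rfl

lemma zp_neg_natCast (e : X ≃ X) (n : ℕ) (x : X) : zp e (-(n : ℤ)) x = e.symm^[n] x := by
  simp [zp, zpow_neg, zpow_natCast, ← Equiv.Perm.inv_def, ← inv_pow]
  rfl

lemma zp_symm (e : X ≃ X) (c : ℤ) (x : X) : zp e.symm c x = zp e (-c) x := by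
  simp [zp, ← Equiv.Perm.inv_def, inv_zpow, zpow_neg]

lemma zp_injective (e : X ≃ X) (c : ℤ) : Function.Injective (zp e c) :=
  Equiv.injective _


section RetBasic
variable (e : X ≃ X) (B : Set X)

lemma symm_iter_cancel (n : ℕ) (y : X) : e.symm^[n] (e^[n] y) = y :=
  (Function.LeftInverse.iterate e.symm_apply_apply n) y

lemma iter_symm_cancel (n : ℕ) (y : X) : e^[n] (e.symm^[n] y) = y :=
  (Function.LeftInverse.iterate e.apply_symm_apply n) y

lemma frt_mem {x : X} {t : ℕ} (ht : 1 ≤ t) (hx : e^[t] x ∈ B) :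
    1 ≤ firstRetTime ⇑e B x ∧ e^[firstRetTime ⇑e B x] x ∈ B ∧
      firstRetTime ⇑e B x ≤ t := by
  have hne : {n : ℕ | 1 ≤ n ∧ (⇑e)^[n] x ∈ B}.Nonempty := ⟨t, ht, hx⟩
  have hmem := Nat.sInf_mem hne
  exact ⟨hmem.1, hmem.2, Nat.sInf_le ⟨ht, hx⟩⟩

lemma frt_not_mem {x : X} {s : ℕ} (h1 : 1 ≤ s) (h2 : s < firstRetTime ⇑e B x) :
    e^[s] x ∉ B := fun hs => Nat.notMem_of_lt_sInf h2 ⟨h1, hs⟩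

/-- Lemma B: the backward return map inverts the forward return map. -/
lemma retmap_inv {x : X} {t : ℕ} (hx : x ∈ B) (ht : 1 ≤ t) (hxt : e^[t] x ∈ B) :
    firstRetTime ⇑e.symm B (firstRetMap ⇑e B x) = firstRetTime ⇑e B x ∧
    firstRetMap ⇑e.symm B (firstRetMap ⇑e B x) = x := by
  obtain ⟨hr1, hrB, hrt⟩ := frt_mem e B ht hxt
  set r := firstRetTime ⇑e B x with hr
  have hsymm : ∀ n : ℕ, e.symm^[n] (e^[r] x) = e^[r - n] x ∨ n > r := by
    intro n
    by_cases hn : n ≤ r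
    · left
      have : e^[r] x = e^[n] (e^[r-n] x) := by
        rw [← Function.iterate_add_apply]; congr 1; omega
      rw [this, symm_iter_cancel]
    · right; omega
  have hrt' : 1 ≤ r ∧ e.symm^[r] (e^[r] x) ∈ B := by
    refine ⟨hr1, ?_⟩
    rcases hsymm r with h | h
    · rw [h]; simpa using hx
    · omega
  have hfrt : firstRetTime ⇑e.symm B (firstRetMap ⇑e B x) = r := by
    have hle : firstRetTime ⇑e.symm B (firstRetMap ⇑e B x) ≤ r :=
      Nat.sInf_le (by exact ⟨hrt'.1, by simpa [firstRetMap, ← hr] using hrt'.2⟩)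
    rcases Nat.lt_or_ge (firstRetTime ⇑e.symm B (firstRetMap ⇑e B x)) r with hlt | hge
    · exfalso
      set s := firstRetTime ⇑e.symm B (firstRetMap ⇑e B x) with hs
      have hsne : {n : ℕ | 1 ≤ n ∧ (⇑e.symm)^[n] (firstRetMap ⇑e B x) ∈ B}.Nonempty :=
        ⟨r, hrt'.1, by simpa [firstRetMap, ← hr] using hrt'.2⟩
      have hmem : 1 ≤ s ∧ (⇑e.symm)^[s] (firstRetMap ⇑e B x) ∈ B := Nat.sInf_mem hsne
      have h1s : 1 ≤ s := hmem.1
      have hsB : e.symm^[s] (e^[r] x) ∈ B := by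
        simpa [firstRetMap, ← hr] using hmem.2
      rcases hsymm s with h | h
      · rw [h] at hsB
        exact frt_not_mem e B (by omega) (by omega) hsB
      · omega
    · omega
  refine ⟨hfrt, ?_⟩
  have : firstRetMap ⇑e.symm B (firstRetMap ⇑e B x) = e.symm^[r] (e^[r] x) := by
    rw [firstRetMap, hfrt]; rfl
  rw [this]
  rcases hsymm r with h | h
  · rw [h]; simp
  · omega

open scoped Classical in
/-- number of returns to `B` within the first `m` iterates -/
noncomputable def cnt (e : X ≃ X) (B : Set X) (m : ℕ) (x : X) : ℕ :=
  ((Finset.Icc 1 m).filter fun j => e^[j] x ∈ B).card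

lemma cnt_le (m : ℕ) (x : X) : cnt e B m x ≤ m := by
  classical
  calc cnt e B m x ≤ (Finset.Icc 1 m).card := Finset.card_filter_le _ _
  _ = m := by rw [Nat.card_Icc]; omega

lemma cnt_pos {m : ℕ} {x : X} (hm : 1 ≤ m) (hx : e^[m] x ∈ B) : 1 ≤ cnt e B m x := by
  classical
  have : m ∈ (Finset.Icc 1 m).filter fun j => e^[j] x ∈ B :=
    Finset.mem_filter.mpr ⟨Finset.mem_Icc.mpr ⟨hm, le_refl m⟩, hx⟩
  exact Finset.card_pos.mpr ⟨m, this⟩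

/-- Lemma A: the `N`-step jump is the `cnt`-th iterate of the first return map. -/
lemma retmap_iter_cnt : ∀ m : ℕ, ∀ x : X, x ∈ B → e^[m] x ∈ B →
    (firstRetMap ⇑e B)^[cnt e B m x] x = e^[m] x := by
  classical
  intro m
  induction m using Nat.strong_induction_on with
  | _ m ih =>
    intro x hx hmx
    rcases Nat.eq_zero_or_pos m with rfl | hm
    · simp [cnt]
    obtain ⟨hr1, hrB, hrm⟩ := frt_mem e B hm hmx
    set r := firstRetTime ⇑e B x with hr
    have hkey : e^[m - r] (e^[r] x) ∈ B := by
      rw [← Function.iterate_add_apply]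
      have : m - r + r = m := by omega
      rw [this]; exact hmx
    have hih := ih (m - r) (by omega) (e^[r] x) hrB hkey
    have hcnt : cnt e B m x = cnt e B (m - r) (e^[r] x) + 1 := by
      rw [cnt, cnt]
      have hsplit : Finset.Icc 1 m = Finset.Icc 1 r ∪ Finset.Ioc r m := by
        ext j; simp only [Finset.mem_Icc, Finset.mem_Ioc, Finset.mem_union]; omega
      rw [hsplit, Finset.filter_union, Finset.card_union_of_disjoint]
      · have h1 : (Finset.Icc 1 r).filter (fun j => e^[j] x ∈ B) = {r} := by
          ext j
          simp only [Finset.mem_filter, Finset.mem_Icc, Finset.mem_singleton]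
          constructor
          · rintro ⟨⟨hj1, hjr⟩, hjB⟩
            by_contra hne
            exact frt_not_mem e B hj1 (by omega) hjB
          · rintro rfl; exact ⟨⟨hr1, le_refl _⟩, hrB⟩
        have h2 : ((Finset.Ioc r m).filter (fun j => e^[j] x ∈ B)).card
            = ((Finset.Icc 1 (m - r)).filter (fun j => e^[j] (e^[r] x) ∈ B)).card := by
          have hmap : Finset.Ioc r m
              = (Finset.Icc 1 (m - r)).map (addRightEmbedding r) := by
            rw [← Finset.Icc_add_one_left_eq_Ioc, Finset.map_add_right_Icc]
            congr 1 <;> omega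
          rw [hmap, Finset.filter_map, Finset.card_map]
          congr 1
          apply Finset.filter_congr
          intro j _
          simp only [addRightEmbedding_apply, Function.comp]
          rw [← Function.iterate_add_apply]
        rw [h1, h2, Finset.card_singleton]
        omega
      · rw [Finset.disjoint_left]
        intro a ha hb
        simp only [Finset.mem_filter, Finset.mem_Icc, Finset.mem_Ioc] at ha hb
        omega
    rw [hcnt, Function.iterate_succ_apply]
    have : firstRetMap ⇑e B x = e^[r] x := by rw [firstRetMap, ← hr]
    rw [this, hih, ← Function.iterate_add_apply]
    congr 1
    omega

end RetBasic

section GoodSec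
variable (e : X ≃ X) (B : Set X) (N : X → ℕ)

/-- Good points: non-periodic, with forward and backward returns and `N`-returns
at every point of the orbit. -/
def Good (x : X) : Prop :=
  (∀ c : ℤ, zp e c x = x → c = 0) ∧
  ∀ p : ℤ, zp e p x ∈ B →
    (∃ t : ℕ, 1 ≤ t ∧ zp e (p + t) x ∈ B) ∧
    (∃ t : ℕ, 1 ≤ t ∧ zp e (p - t) x ∈ B) ∧
    zp e (p + N (zp e p x)) x ∈ B

variable {e B N}

lemma Good.shift {x : X} (h : Good e B N x) (c : ℤ) : Good e B N (zp e c x) := by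
  obtain ⟨h1, h2⟩ := h
  constructor
  · intro d hd
    rw [← zp_add] at hd
    have h3 : zp e (-c) (zp e (d + c) x) = zp e (-c) (zp e c x) := by rw [hd]
    rw [← zp_add, ← zp_add] at h3
    simp only [neg_add_cancel_left, neg_add_cancel] at h3
    rw [zp_zero] at h3
    have := h1 _ h3
    omega
  · intro p hp
    rw [← zp_add] at hp
    obtain ⟨hf, hb, hN⟩ := h2 (p + c) hp
    refine ⟨?_, ?_, ?_⟩
    · obtain ⟨t, ht, htB⟩ := hf
      refine ⟨t, ht, ?_⟩
      rw [← zp_add]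
      convert htB using 2
      ring
    · obtain ⟨t, ht, htB⟩ := hb
      refine ⟨t, ht, ?_⟩
      rw [← zp_add]
      convert htB using 2
      ring
    · have harg : zp e p (zp e c x) = zp e (p + c) x := by rw [← zp_add]
      rw [harg, ← zp_add]
      convert hN using 2
      ring

/-- two-sided iterate of the first-return map -/
noncomputable def Yf (e : X ≃ X) (B : Set X) (p : ℤ) (x : X) : X :=
  if 0 ≤ p then (firstRetMap ⇑e B)^[p.toNat] x
  else (firstRetMap ⇑e.symm B)^[(-p).toNat] x

lemma Yf_zero (x : X) : Yf e B 0 x = x := by simp [Yf]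

lemma Yf_natCast (k : ℕ) (x : X) : Yf e B (k : ℤ) x = (firstRetMap ⇑e B)^[k] x := by
  simp [Yf]

lemma Good.frt_pos {x : X} (h : Good e B N x) (hx : x ∈ B) :
    1 ≤ firstRetTime ⇑e B x := by
  obtain ⟨t, ht, htB⟩ := ((h.2 0 (by rwa [zp_zero])).1)
  rw [zero_add, zp_natCast] at htB
  exact (frt_mem e B ht htB).1

lemma Good.gB_mem {x : X} (h : Good e B N x) (hx : x ∈ B) :
    firstRetMap ⇑e B x ∈ B := by
  obtain ⟨t, ht, htB⟩ := ((h.2 0 (by rwa [zp_zero])).1)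
  rw [zero_add, zp_natCast] at htB
  exact (frt_mem e B ht htB).2.1

lemma Good.gB_eq_zp {x : X} (h : Good e B N x) (hx : x ∈ B) :
    firstRetMap ⇑e B x = zp e (firstRetTime ⇑e B x) x := by
  rw [firstRetMap, zp_natCast]

lemma Good.gBi_gB {x : X} (h : Good e B N x) (hx : x ∈ B) :
    firstRetMap ⇑e.symm B (firstRetMap ⇑e B x) = x := by
  obtain ⟨t, ht, htB⟩ := ((h.2 0 (by rwa [zp_zero])).1)
  rw [zero_add, zp_natCast] at htB
  exact (retmap_inv e B hx ht htB).2

lemma Good.gBi_frt_pos {x : X} (h : Good e B N x) (hx : x ∈ B) :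
    1 ≤ firstRetTime ⇑e.symm B x := by
  obtain ⟨t, ht, htB⟩ := ((h.2 0 (by rwa [zp_zero])).2.1)
  rw [zero_sub, zp_neg_natCast] at htB
  exact (frt_mem e.symm B ht htB).1

lemma Good.gBi_mem {x : X} (h : Good e B N x) (hx : x ∈ B) :
    firstRetMap ⇑e.symm B x ∈ B := by
  obtain ⟨t, ht, htB⟩ := ((h.2 0 (by rwa [zp_zero])).2.1)
  rw [zero_sub, zp_neg_natCast] at htB
  exact (frt_mem e.symm B ht htB).2.1

lemma Good.gB_gBi {x : X} (h : Good e B N x) (hx : x ∈ B) :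
    firstRetMap ⇑e B (firstRetMap ⇑e.symm B x) = x := by
  obtain ⟨t, ht, htB⟩ := ((h.2 0 (by rwa [zp_zero])).2.1)
  rw [zero_sub, zp_neg_natCast] at htB
  have := (retmap_inv e.symm B hx ht htB).2
  rwa [Equiv.symm_symm] at this

lemma Good.gB_iter {x : X} (h : Good e B N x) (hx : x ∈ B) (k : ℕ) :
    (firstRetMap ⇑e B)^[k] x ∈ B ∧ Good e B N ((firstRetMap ⇑e B)^[k] x) ∧
      ∃ c : ℕ, k ≤ c ∧ (firstRetMap ⇑e B)^[k] x = e^[c] x := by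
  induction k with
  | zero => exact ⟨hx, h, 0, le_refl _, rfl⟩
  | succ k ih =>
    obtain ⟨hzB, hzg, c, hkc, hc⟩ := ih
    set z := (firstRetMap ⇑e B)^[k] x with hz
    rw [Function.iterate_succ_apply', ← hz]
    have hr1 := hzg.frt_pos hzB
    refine ⟨hzg.gB_mem hzB, ?_, ?_⟩
    · have : firstRetMap ⇑e B z = zp e ((firstRetTime ⇑e B z : ℕ) + (c:ℤ)) x := by
        rw [hzg.gB_eq_zp hzB, hc, ← zp_natCast e c, ← zp_add]
      rw [this]
      exact h.shift _
    · refine ⟨firstRetTime ⇑e B z + c, by omega, ?_⟩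
      rw [firstRetMap, hc, ← Function.iterate_add_apply]

lemma Good.gBi_iter {x : X} (h : Good e B N x) (hx : x ∈ B) (k : ℕ) :
    (firstRetMap ⇑e.symm B)^[k] x ∈ B ∧ Good e B N ((firstRetMap ⇑e.symm B)^[k] x) ∧
      ∃ c : ℕ, k ≤ c ∧ (firstRetMap ⇑e.symm B)^[k] x = e.symm^[c] x := by
  induction k with
  | zero => exact ⟨hx, h, 0, le_refl _, rfl⟩
  | succ k ih =>
    obtain ⟨hzB, hzg, c, hkc, hc⟩ := ih
    set z := (firstRetMap ⇑e.symm B)^[k] x with hz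
    rw [Function.iterate_succ_apply', ← hz]
    have hr1 := hzg.gBi_frt_pos hzB
    refine ⟨hzg.gBi_mem hzB, ?_, ?_⟩
    · have : firstRetMap ⇑e.symm B z = zp e (-(((firstRetTime ⇑e.symm B z : ℕ) + (c:ℤ)))) x := by
        have hcast : (-((((firstRetTime ⇑e.symm B z : ℕ) : ℤ)) + (c:ℤ)))
            = -(((firstRetTime ⇑e.symm B z + c : ℕ) : ℤ)) := by push_cast; ring
        rw [hcast, zp_neg_natCast, firstRetMap, hc, ← Function.iterate_add_apply]
      rw [this]
      exact h.shift _
    · refine ⟨firstRetTime ⇑e.symm B z + c, by omega, ?_⟩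
      rw [firstRetMap, hc, ← Function.iterate_add_apply]

lemma Good.Y_mem {x : X} (h : Good e B N x) (hx : x ∈ B) (p : ℤ) :
    Yf e B p x ∈ B ∧ Good e B N (Yf e B p x) := by
  by_cases hp : 0 ≤ p
  · rw [Yf, if_pos hp]
    exact ⟨(h.gB_iter hx p.toNat).1, (h.gB_iter hx p.toNat).2.1⟩
  · rw [Yf, if_neg hp]
    exact ⟨(h.gBi_iter hx (-p).toNat).1, (h.gBi_iter hx (-p).toNat).2.1⟩

lemma Good.Y_step_up {x : X} (h : Good e B N x) (hx : x ∈ B) (p : ℤ) :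
    Yf e B (p + 1) x = firstRetMap ⇑e B (Yf e B p x) := by
  by_cases hp : 0 ≤ p
  · have h1 : Yf e B (p+1) x = (firstRetMap ⇑e B)^[(p+1).toNat] x := by
      rw [Yf, if_pos (by omega : (0:ℤ) ≤ p+1)]
    have h2 : Yf e B p x = (firstRetMap ⇑e B)^[p.toNat] x := by rw [Yf, if_pos hp]
    rw [h1, h2]
    have h3 : (p + 1).toNat = p.toNat + 1 := by omega
    rw [h3, Function.iterate_succ_apply']
  · have hw := h.gBi_iter hx (-(p+1)).toNat
    set w := (firstRetMap ⇑e.symm B)^[(-(p+1)).toNat] x with hwdef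
    have hYp : Yf e B p x = firstRetMap ⇑e.symm B w := by
      rw [Yf, if_neg hp, hwdef]
      have hcnt : (-p).toNat = (-(p+1)).toNat + 1 := by omega
      rw [hcnt, Function.iterate_succ_apply']
    have hY1 : Yf e B (p + 1) x = w := by
      by_cases hp1 : 0 ≤ p + 1
      · have : p + 1 = 0 := by omega
        rw [this, Yf_zero, hwdef]
        have : (-(p+1)).toNat = 0 := by omega
        rw [this, Function.iterate_zero_apply]
      · rw [Yf, if_neg hp1]
    rw [hY1, hYp, hw.2.1.gB_gBi hw.1]

lemma Good.Y_step_dn {x : X} (h : Good e B N x) (hx : x ∈ B) (p : ℤ) :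
    Yf e B (p - 1) x = firstRetMap ⇑e.symm B (Yf e B p x) := by
  by_cases hp : p ≤ 0
  · rw [Yf, if_neg (by omega), Yf]
    by_cases hp0 : 0 ≤ p
    · have hpz : p = 0 := by omega
      rw [if_pos hp0, hpz]
      have h1 : (-(0 - 1) : ℤ).toNat = 1 := by omega
      have h2 : (0 : ℤ).toNat = 0 := by omega
      rw [h1, h2]
      simp
    · rw [if_neg hp0]
      have : (-(p - 1)).toNat = (-p).toNat + 1 := by omega
      rw [this, Function.iterate_succ_apply']
  · have hw := h.gB_iter hx (p - 1).toNat
    set w := (firstRetMap ⇑e B)^[(p-1).toNat] x with hwdef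
    have hYp : Yf e B p x = firstRetMap ⇑e B w := by
      rw [Yf, if_pos (by omega : (0:ℤ) ≤ p), hwdef]
      have hcnt : p.toNat = (p-1).toNat + 1 := by omega
      rw [hcnt, Function.iterate_succ_apply']
    have hY1 : Yf e B (p - 1) x = w := by
      rw [Yf, if_pos (by omega)]
    rw [hY1, hYp, hw.2.1.gBi_gB hw.1]

lemma Good.Y_add {x : X} (h : Good e B N x) (hx : x ∈ B) (i : ℤ) (p : ℤ) :
    Yf e B (p + i) x = Yf e B p (Yf e B i x) := by
  have hyB := (h.Y_mem hx i).1
  have hyg := (h.Y_mem hx i).2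
  induction p using Int.induction_on with
  | zero => rw [zero_add, Yf_zero]
  | succ k ihk =>
    have e1 : (k : ℤ) + 1 + i = ((k : ℤ) + i) + 1 := by ring
    rw [e1, h.Y_step_up hx, ihk, ← hyg.Y_step_up hyB]
  | pred k ihk =>
    have e1 : (-(k : ℤ) - 1 + i) = ((-(k:ℤ) + i)) - 1 := by ring
    rw [e1, h.Y_step_dn hx, ihk, ← hyg.Y_step_dn hyB]

lemma Good.Y_ne {x : X} (h : Good e B N x) (hx : x ∈ B) {d : ℤ} (hd : d ≠ 0) :
    Yf e B d x ≠ x := by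
  intro hEq
  by_cases hp : 0 ≤ d
  · rw [Yf, if_pos hp] at hEq
    obtain ⟨-, -, c, hkc, hc⟩ := h.gB_iter hx d.toNat
    rw [hc, ← zp_natCast] at hEq
    have := h.1 _ hEq
    omega
  · rw [Yf, if_neg hp] at hEq
    obtain ⟨-, -, c, hkc, hc⟩ := h.gBi_iter hx (-d).toNat
    rw [hc, ← zp_neg_natCast] at hEq
    have := h.1 _ hEq
    omega

lemma Good.Y_inj {x : X} (h : Good e B N x) (hx : x ∈ B) {p q : ℤ}
    (hpq : Yf e B p x = Yf e B q x) : p = q := by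
  have hyB := (h.Y_mem hx q).1
  have hyg := (h.Y_mem hx q).2
  have : Yf e B (p - q) (Yf e B q x) = Yf e B q x := by
    rw [← h.Y_add hx q (p - q)]
    have : p - q + q = p := by ring
    rw [this, hpq]
  by_contra hne
  exact hyg.Y_ne hyB (by omega : p - q ≠ 0) this

/-- the number of returns to `B` during the jump `x ↦ e^[N x] x` -/
noncomputable def nfun (e : X ≃ X) (B : Set X) (N : X → ℕ) (x : X) : ℕ :=
  cnt e B (N x) x

lemma Good.NB_mem {x : X} (h : Good e B N x) (hx : x ∈ B) : e^[N x] x ∈ B := by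
  have := (h.2 0 (by rwa [zp_zero])).2.2
  rwa [zp_zero, zero_add, zp_natCast] at this

lemma Good.gt_eq {x : X} (h : Good e B N x) (hx : x ∈ B) :
    e^[N x] x = (firstRetMap ⇑e B)^[nfun e B N x] x :=
  (retmap_iter_cnt e B (N x) x hx (h.NB_mem hx)).symm

lemma Good.nfun_pos {x : X} (h : Good e B N x) (hx : x ∈ B) (hN : 1 ≤ N x) :
    1 ≤ nfun e B N x :=
  cnt_pos e B hN (h.NB_mem hx)

lemma nfun_le (x : X) : nfun e B N x ≤ N x := cnt_le e B (N x) x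

lemma Good.gt_Y {x : X} (h : Good e B N x) (hx : x ∈ B) :
    e^[N x] x = Yf e B (nfun e B N x : ℤ) x := by
  rw [Yf_natCast]
  exact h.gt_eq hx

/-- position trajectory of the jump map along the return-map orbit -/
noncomputable def traj (e : X ≃ X) (B : Set X) (N : X → ℕ) (x : X) : ℕ → ℤ → ℤ
  | 0, p => p
  | k+1, p => traj e B N x k p + nfun e B N (Yf e B (traj e B N x k p) x)

lemma traj_zero (x : X) (p : ℤ) : traj e B N x 0 p = p := rfl

lemma traj_succ (x : X) (k : ℕ) (p : ℤ) :
    traj e B N x (k+1) p = traj e B N x k p + nfun e B N (Yf e B (traj e B N x k p) x) := rfl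

lemma Good.traj_lb {x : X} (h : Good e B N x) (hx : x ∈ B) (hN1 : ∀ y ∈ B, 1 ≤ N y) :
    ∀ k : ℕ, ∀ p : ℤ, p + k ≤ traj e B N x k p := by
  intro k
  induction k with
  | zero => intro p; simp [traj_zero]
  | succ k ih =>
    intro p
    rw [traj_succ]
    have hy := h.Y_mem hx (traj e B N x k p)
    have := hy.2.nfun_pos hy.1 (hN1 _ hy.1)
    have := ih p
    push_cast
    omega

lemma Good.gt_iter_Y {x : X} (h : Good e B N x) (hx : x ∈ B) :
    ∀ k : ℕ, ∀ p : ℤ, (fun z => e^[N z] z)^[k] (Yf e B p x) = Yf e B (traj e B N x k p) x := by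
  intro k
  induction k with
  | zero => intro p; rfl
  | succ k ih =>
    intro p
    rw [Function.iterate_succ_apply', ih, traj_succ]
    have hy := h.Y_mem hx (traj e B N x k p)
    set z := Yf e B (traj e B N x k p) x with hz
    have : e^[N z] z = Yf e B (nfun e B N z : ℤ) z := hy.2.gt_Y hy.1
    rw [this, hz, ← h.Y_add hx (traj e B N x k p) (nfun e B N z : ℤ)]
    congr 1
    rw [hz]
    ring

lemma Good.traj_shift {x : X} (h : Good e B N x) (hx : x ∈ B) (i : ℤ) :
    ∀ k : ℕ, ∀ p : ℤ, traj e B N (Yf e B i x) k p = traj e B N x k (p + i) - i := by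
  intro k
  induction k with
  | zero => intro p; rw [traj_zero, traj_zero]; ring
  | succ k ih =>
    intro p
    rw [traj_succ, traj_succ, ih]
    have harg : Yf e B (traj e B N x k (p + i) - i) (Yf e B i x)
        = Yf e B (traj e B N x k (p + i)) x := by
      rw [← h.Y_add hx i _]
      congr 1
      ring
    rw [harg]
    ring

lemma traj_telescope (x : X) : ∀ K : ℕ, ∀ p : ℤ,
    ((∑ j ∈ Finset.range K, nfun e B N (Yf e B (traj e B N x j p) x) : ℕ) : ℤ)
      = traj e B N x K p - p := by
  intro K
  induction K with
  | zero => intro p; simp [traj_zero]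
  | succ K ih =>
    intro p
    rw [Finset.sum_range_succ, traj_succ, Nat.cast_add, ih p]
    ring

/-- the defining condition of the bad set `D`: no backward point's jump-trajectory
ever merges with the trajectory of the point itself -/
def MinPt (e : X ≃ X) (B : Set X) (N : X → ℕ) (z : X) : Prop :=
  ∀ m k l : ℕ, traj e B N z k (-((m:ℤ)+1)) ≠ traj e B N z l 0

open scoped Classical in
lemma window_bound {x : X} (h : Good e B N x) (hx : x ∈ B)
    (hN1 : ∀ y ∈ B, 1 ≤ N y) (M : ℕ) :
    ∑ i ∈ Finset.range (M+1), (M + 1 - i) * (if MinPt e B N (Yf e B (i:ℤ) x) then 1 else 0)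
      ≤ ∑ q ∈ Finset.range (M+1), nfun e B N (Yf e B (q:ℤ) x) := by
  classical
  set g : ℤ → ℕ := fun q => nfun e B N (Yf e B q x) with hg
  set S : Finset ℕ := (Finset.range (M+1)).filter
    (fun i => MinPt e B N (Yf e B (i:ℤ) x)) with hS
  have hLHS : ∑ i ∈ Finset.range (M+1),
      (M + 1 - i) * (if MinPt e B N (Yf e B (i:ℤ) x) then 1 else 0)
      = ∑ i ∈ S, (M + 1 - i) := by
    rw [hS, Finset.sum_filter]
    congr 1
    ext i
    by_cases hi : MinPt e B N (Yf e B (i:ℤ) x) <;> simp [hi]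
  rw [hLHS]
  set T : ℕ → Finset ℤ := fun i =>
    (Finset.Icc (i:ℤ) (M:ℤ)).filter (fun q => ∃ j : ℕ, traj e B N x j (i:ℤ) = q) with hT
  -- Step A: per-element lower bound
  have stepA : ∀ i ∈ S, (M + 1 - i) ≤ ∑ q ∈ T i, g q := by
    intro i hiS
    have hiM : i ≤ M := by
      have := Finset.mem_filter.mp hiS
      have := Finset.mem_range.mp this.1
      omega
    set f : ℕ → ℤ := fun j => traj e B N x j (i:ℤ) with hf
    have hfmono : StrictMono f := by
      apply strictMono_nat_of_lt_succ
      intro j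
      rw [hf]
      simp only [traj_succ]
      have hy := h.Y_mem hx (traj e B N x j (i:ℤ))
      have := hy.2.nfun_pos hy.1 (hN1 _ hy.1)
      omega
    have hflb : ∀ j : ℕ, (i:ℤ) + j ≤ f j := fun j => h.traj_lb hx hN1 j (i:ℤ)
    have hne : {j : ℕ | (M:ℤ) < f j}.Nonempty := by
      refine ⟨M + 1, ?_⟩
      have := hflb (M+1)
      simp only [Set.mem_setOf_eq]
      push_cast at this ⊢
      omega
    set K := sInf {j : ℕ | (M:ℤ) < f j} with hK
    have hKmem : (M:ℤ) < f K := Nat.sInf_mem hne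
    have hKsmall : ∀ j < K, f j ≤ (M:ℤ) := by
      intro j hj
      by_contra hcon
      have : K ≤ j := Nat.sInf_le (by simp only [Set.mem_setOf_eq]; omega)
      omega
    have htel : ((∑ j ∈ Finset.range K, g (f j) : ℕ) : ℤ) = f K - i :=
      traj_telescope x K (i:ℤ)
    have hsum1 : M + 1 - i ≤ ∑ j ∈ Finset.range K, g (f j) := by omega
    have himg : (Finset.range K).image f ⊆ T i := by
      intro q hq
      obtain ⟨j, hj, rfl⟩ := Finset.mem_image.mp hq
      rw [hT]
      refine Finset.mem_filter.mpr ⟨Finset.mem_Icc.mpr ⟨?_, ?_⟩, ⟨j, rfl⟩⟩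
      · have := hflb j; omega
      · exact hKsmall j (Finset.mem_range.mp hj)
    have hsum2 : ∑ j ∈ Finset.range K, g (f j) = ∑ q ∈ (Finset.range K).image f, g q :=
      (Finset.sum_image (fun a _ b _ hab => hfmono.injective hab)).symm
    calc M + 1 - i ≤ ∑ j ∈ Finset.range K, g (f j) := hsum1
      _ = ∑ q ∈ (Finset.range K).image f, g q := hsum2
      _ ≤ ∑ q ∈ T i, g q := Finset.sum_le_sum_of_subset himg
  -- Step B: disjointness
  have stepB : ∀ i ∈ S, ∀ i' ∈ S, i ≠ i' → Disjoint (T i) (T i') := by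
    have key : ∀ i i' : ℕ, i ∈ S → i' ∈ S → i' < i → Disjoint (T i) (T i') := by
      intro i i' hiS hi'S hlt
      rw [Finset.disjoint_left]
      intro q hqi hqi'
      obtain ⟨-, j', hj'⟩ := Finset.mem_filter.mp hqi
      obtain ⟨-, j, hj⟩ := Finset.mem_filter.mp hqi'
      have hmin : MinPt e B N (Yf e B (i:ℤ) x) := (Finset.mem_filter.mp hiS).2
      have hshift := h.traj_shift hx (i:ℤ)
      set m : ℕ := i - i' - 1 with hm
      have h1 : traj e B N (Yf e B (i:ℤ) x) j (-((m:ℤ)+1)) = q - i := by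
        rw [hshift j]
        have : (-((m:ℤ)+1) + i) = (i' : ℤ) := by omega
        rw [this, hj]
      have h2 : traj e B N (Yf e B (i:ℤ) x) j' 0 = q - i := by
        rw [hshift j', zero_add, hj']
      exact hmin m j j' (h1.trans h2.symm)
    intro i hiS i' hi'S hne
    rcases Nat.lt_or_ge i' i with hlt | hge
    · exact key i i' hiS hi'S hlt
    · exact (key i' i hi'S hiS (by omega)).symm
  -- Step C: combine
  have hbiU : ∑ i ∈ S, (M + 1 - i) ≤ ∑ q ∈ S.biUnion T, g q := by
    rw [Finset.sum_biUnion]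
    · exact Finset.sum_le_sum stepA
    · intro i hi i' hi' hne
      exact stepB i hi i' hi' hne
  refine hbiU.trans ?_
  have hsub : S.biUnion T ⊆ Finset.Icc (0:ℤ) (M:ℤ) := by
    intro q hq
    obtain ⟨i, hiS, hqT⟩ := Finset.mem_biUnion.mp hq
    have := Finset.mem_Icc.mp (Finset.mem_filter.mp hqT).1
    refine Finset.mem_Icc.mpr ⟨?_, this.2⟩
    have : (0:ℤ) ≤ i := Int.natCast_nonneg i
    omega
  refine (Finset.sum_le_sum_of_subset hsub).trans ?_
  have hIcc : Finset.Icc (0:ℤ) (M:ℤ) = (Finset.range (M+1)).image (fun n : ℕ => (n:ℤ)) := by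
    ext q
    simp only [Finset.mem_Icc, Finset.mem_image, Finset.mem_range]
    constructor
    · rintro ⟨h0, hM⟩
      exact ⟨q.toNat, by omega, by omega⟩
    · rintro ⟨n, hn, rfl⟩
      omega
  rw [hIcc, Finset.sum_image (fun a _ b _ hab => by exact_mod_cast hab)]

lemma frt_eq_iff (x : X) (t : ℕ) :
    firstRetTime ⇑e B x = t ↔
      (t = 0 ∧ ∀ s : ℕ, 1 ≤ s → e^[s] x ∉ B) ∨
      (1 ≤ t ∧ e^[t] x ∈ B ∧ ∀ s : ℕ, 1 ≤ s → s < t → e^[s] x ∉ B) := by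
  constructor
  · intro ht
    by_cases hne : {n : ℕ | 1 ≤ n ∧ (⇑e)^[n] x ∈ B}.Nonempty
    · right
      have hmem : 1 ≤ firstRetTime ⇑e B x ∧ (⇑e)^[firstRetTime ⇑e B x] x ∈ B :=
        Nat.sInf_mem hne
      rw [ht] at hmem
      exact ⟨hmem.1, hmem.2, fun s h1 h2 => frt_not_mem e B h1 (ht ▸ h2)⟩
    · left
      constructor
      · rw [← ht, firstRetTime, Set.not_nonempty_iff_eq_empty.mp hne, Nat.sInf_empty]
      · intro s h1 hs
        exact hne ⟨s, h1, hs⟩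
  · rintro (⟨rfl, hemp⟩ | ⟨h1, htB, hmin⟩)
    · rw [firstRetTime]
      convert Nat.sInf_empty
      rw [Set.eq_empty_iff_forall_notMem]
      rintro n ⟨hn1, hnB⟩
      exact hemp n hn1 hnB
    · refine le_antisymm (Nat.sInf_le ⟨h1, htB⟩) ?_
      by_contra hcon
      push_neg at hcon
      have hne : {n : ℕ | 1 ≤ n ∧ (⇑e)^[n] x ∈ B}.Nonempty := ⟨t, h1, htB⟩
      have hmem : 1 ≤ firstRetTime ⇑e B x ∧ (⇑e)^[firstRetTime ⇑e B x] x ∈ B :=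
        Nat.sInf_mem hne
      exact hmin _ hmem.1 hcon hmem.2

variable (e B) in
lemma Bt_eq_preimage {t : ℕ} (ht : 1 ≤ t) :
    {x | x ∈ B ∧ firstRetTime ⇑e B x = t}
      = (⇑e)^[t] ⁻¹' {y | y ∈ B ∧ firstRetTime ⇑e.symm B y = t} := by
  ext x
  simp only [Set.mem_setOf_eq, Set.mem_preimage]
  constructor
  · rintro ⟨hxB, hfrt⟩
    have hmem : e^[t] x ∈ B := by
      rcases (frt_eq_iff x t).mp hfrt with ⟨h0, -⟩ | ⟨-, h2, -⟩
      · omega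
      · exact h2
    have hinv := retmap_inv e B hxB ht hmem
    have hfm : firstRetMap ⇑e B x = e^[t] x := by rw [firstRetMap, hfrt]
    rw [hfm] at hinv
    exact ⟨hmem, by rw [hinv.1, hfrt]⟩
  · rintro ⟨hyB, hbrt⟩
    have hmem : e.symm^[t] (e^[t] x) ∈ B := by
      rcases (frt_eq_iff (e := e.symm) (e^[t] x) t).mp hbrt with ⟨h0, -⟩ | ⟨-, h2, -⟩
      · omega
      · exact h2
    have hxB : x ∈ B := by rwa [symm_iter_cancel] at hmem
    have hinv := retmap_inv e.symm B hyB ht (by rwa [symm_iter_cancel] at hmem ⊢)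
    have hfm : firstRetMap ⇑e.symm B (e^[t] x) = x := by
      rw [firstRetMap, hbrt, symm_iter_cancel]
    rw [hfm] at hinv
    rw [Equiv.symm_symm] at hinv
    exact ⟨hxB, by rw [hinv.1, hbrt]⟩

section Meas
variable [MeasurableSpace X] (he : Measurable (⇑e)) (hesymm : Measurable (⇑e.symm))
  (hB : MeasurableSet B) (hN : Measurable N)

include he hB in
lemma measurable_frt : Measurable (firstRetTime ⇑e B) := by
  apply measurable_to_countable'
  intro t
  rcases Nat.eq_zero_or_pos t with rfl | ht
  · have : firstRetTime ⇑e B ⁻¹' {0}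
        = ⋂ s : ℕ, {x | 1 ≤ s → e^[s] x ∉ B} := by
      ext x
      simp only [Set.mem_preimage, Set.mem_singleton_iff, Set.mem_iInter, Set.mem_setOf_eq]
      rw [frt_eq_iff]
      constructor
      · rintro (⟨-, h⟩ | ⟨h1, -, -⟩)
        · exact fun s hs => h s hs
        · omega
      · intro h; exact Or.inl ⟨rfl, h⟩
    rw [this]
    refine MeasurableSet.iInter fun s => ?_
    by_cases hs : 1 ≤ s
    · simp only [hs, forall_true_left]
      exact (he.iterate s) (hB.compl)
    · simp only [hs, false_implies]
      exact MeasurableSet.univ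
  · have : firstRetTime ⇑e B ⁻¹' {t}
        = {x | e^[t] x ∈ B} ∩ ⋂ s : ℕ, {x | 1 ≤ s → s < t → e^[s] x ∉ B} := by
      ext x
      simp only [Set.mem_preimage, Set.mem_singleton_iff, Set.mem_inter_iff,
        Set.mem_iInter, Set.mem_setOf_eq]
      rw [frt_eq_iff]
      constructor
      · rintro (⟨h0, -⟩ | ⟨-, h2, h3⟩)
        · omega
        · exact ⟨h2, fun s a b => h3 s a b⟩
      · rintro ⟨h2, h3⟩
        exact Or.inr ⟨ht, h2, fun s a b => h3 s a b⟩
    rw [this]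
    refine ((he.iterate t) hB).inter (MeasurableSet.iInter fun s => ?_)
    by_cases hs : 1 ≤ s ∧ s < t
    · simp only [hs.1, hs.2, forall_true_left]
      exact (he.iterate s) (hB.compl)
    · rcases not_and_or.mp hs with hs' | hs'
      · have : {x : X | 1 ≤ s → s < t → (⇑e)^[s] x ∉ B} = Set.univ := by
          ext x; simp only [Set.mem_setOf_eq, Set.mem_univ, iff_true]
          intro h; omega
        rw [this]; exact MeasurableSet.univ
      · have : {x : X | 1 ≤ s → s < t → (⇑e)^[s] x ∉ B} = Set.univ := by
          ext x; simp only [Set.mem_setOf_eq, Set.mem_univ, iff_true]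
          intro h1 h2; omega
        rw [this]; exact MeasurableSet.univ

include he hB in
lemma measurable_firstRetMap : Measurable (firstRetMap ⇑e B) := by
  intro S hS
  have : firstRetMap ⇑e B ⁻¹' S
      = ⋃ t : ℕ, (firstRetTime ⇑e B ⁻¹' {t}) ∩ ((⇑e)^[t] ⁻¹' S) := by
    ext x
    simp only [Set.mem_preimage, Set.mem_iUnion, Set.mem_inter_iff, Set.mem_singleton_iff]
    constructor
    · intro h; exact ⟨firstRetTime ⇑e B x, rfl, h⟩
    · rintro ⟨t, ht, hx⟩; rwa [firstRetMap, ht]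
  rw [this]
  exact MeasurableSet.iUnion fun t =>
    ((measurable_frt he hB) (measurableSet_singleton t)).inter ((he.iterate t) hS)

include he hB hN in
lemma measurable_nfun : Measurable (nfun e B N) := by
  classical
  have hcnt : ∀ m : ℕ, Measurable (fun x => cnt e B m x) := by
    intro m
    have : (fun x => cnt e B m x)
        = fun x => ∑ j ∈ Finset.Icc 1 m, if e^[j] x ∈ B then 1 else 0 := by
      funext x
      rw [cnt, Finset.card_filter]
    rw [this]
    exact Finset.measurable_sum _ fun j _ =>
      Measurable.ite ((he.iterate j) hB) measurable_const measurable_const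
  apply measurable_to_countable'
  intro c
  have : nfun e B N ⁻¹' {c}
      = ⋃ m : ℕ, (N ⁻¹' {m}) ∩ ((fun x => cnt e B m x) ⁻¹' {c}) := by
    ext x
    simp only [Set.mem_preimage, Set.mem_singleton_iff, Set.mem_iUnion, Set.mem_inter_iff]
    constructor
    · intro h; exact ⟨N x, rfl, h⟩
    · rintro ⟨m, hm, hx⟩; rwa [nfun, hm]
  rw [this]
  exact MeasurableSet.iUnion fun m =>
    (hN (measurableSet_singleton m)).inter ((hcnt m) (measurableSet_singleton c))

include he hesymm hB in
lemma measurable_Yf (p : ℤ) : Measurable (fun x => Yf e B p x) := by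
  by_cases hp : 0 ≤ p
  · have : (fun x => Yf e B p x) = (firstRetMap ⇑e B)^[p.toNat] := by
      funext x; rw [Yf, if_pos hp]
    rw [this]
    exact (measurable_firstRetMap he hB).iterate p.toNat
  · have : (fun x => Yf e B p x) = (firstRetMap ⇑e.symm B)^[(-p).toNat] := by
      funext x; rw [Yf, if_neg hp]
    rw [this]
    exact (measurable_firstRetMap (e := e.symm) hesymm hB).iterate (-p).toNat

include he hesymm hB hN in
lemma measurable_traj (k : ℕ) (p : ℤ) : Measurable (fun x => traj e B N x k p) := by
  induction k with
  | zero => simp only [traj_zero]; exact measurable_const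
  | succ k ih =>
    simp only [traj_succ]
    refine ih.add (Measurable.comp measurable_from_top ?_)
    apply measurable_to_countable'
    intro c
    have : (fun x => nfun e B N (Yf e B (traj e B N x k p) x)) ⁻¹' {c}
        = ⋃ q : ℤ, ((fun x => traj e B N x k p) ⁻¹' {q})
            ∩ ((fun x => nfun e B N (Yf e B q x)) ⁻¹' {c}) := by
      ext x
      simp only [Set.mem_preimage, Set.mem_singleton_iff, Set.mem_iUnion, Set.mem_inter_iff]
      constructor
      · intro h; exact ⟨traj e B N x k p, rfl, h⟩
      · rintro ⟨q, hq, hx⟩; rwa [hq]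
    rw [this]
    exact MeasurableSet.iUnion fun q =>
      (ih (measurableSet_singleton q)).inter
        (((measurable_nfun he hB hN).comp (measurable_Yf he hesymm hB q))
          (measurableSet_singleton c))

include he hesymm hB hN in
lemma measurable_MinPt : MeasurableSet {z | MinPt e B N z} := by
  have : {z | MinPt e B N z}
      = ⋂ m : ℕ, ⋂ k : ℕ, ⋂ l : ℕ,
          (⋃ c : ℤ, ((fun z => traj e B N z k (-((m:ℤ)+1))) ⁻¹' {c})
            ∩ ((fun z => traj e B N z l 0) ⁻¹' {c}))ᶜ := by
    ext z
    simp only [Set.mem_setOf_eq, Set.mem_iInter, Set.mem_compl_iff, Set.mem_iUnion,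
      Set.mem_inter_iff, Set.mem_preimage, Set.mem_singleton_iff, MinPt]
    constructor
    · intro h m k l hcon
      obtain ⟨c, h1, h2⟩ := hcon
      exact h m k l (h1.trans h2.symm)
    · intro h m k l hEq
      exact h m k l ⟨traj e B N z l 0, hEq, rfl⟩
  rw [this]
  refine MeasurableSet.iInter fun m => MeasurableSet.iInter fun k =>
    MeasurableSet.iInter fun l => (MeasurableSet.iUnion fun c =>
      ((measurable_traj he hesymm hB hN k _ (measurableSet_singleton c)).inter
        (measurable_traj he hesymm hB hN l 0 (measurableSet_singleton c)))).compl

end Meas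

section MeasPres
variable [MeasurableSpace X] {ν : Measure X}
  (he : Measurable (⇑e)) (hesymm : Measurable (⇑e.symm)) (hB : MeasurableSet B)
  (hme : MeasurePreserving ⇑e ν ν)
  (hnull1 : ν (B ∩ {x | firstRetTime ⇑e B x = 0}) = 0)
  (hnull2 : ν (B ∩ {x | firstRetTime ⇑e.symm B x = 0}) = 0)

include he hesymm hB hme hnull1 hnull2 in
lemma map_retmap_restrict :
    Measure.map (firstRetMap ⇑e B) (ν.restrict B) = ν.restrict B := by
  have hgB := measurable_firstRetMap he hB
  have hfrtm := measurable_frt he hB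
  have hbrtm := measurable_frt (e := e.symm) hesymm hB
  ext S hS
  rw [Measure.map_apply hgB hS, Measure.restrict_apply (hgB hS), Measure.restrict_apply hS]
  set Bt : ℕ → Set X := fun t => B ∩ {x | firstRetTime ⇑e B x = t} with hBt
  set Ct : ℕ → Set X := fun t => B ∩ {x | firstRetTime ⇑e.symm B x = t} with hCt
  have hBtm : ∀ t, MeasurableSet (Bt t) := fun t =>
    hB.inter (hfrtm (measurableSet_singleton t))
  have hCtm : ∀ t, MeasurableSet (Ct t) := fun t =>
    hB.inter (hbrtm (measurableSet_singleton t))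
  have hdecomp : firstRetMap ⇑e B ⁻¹' S ∩ B = ⋃ t, (Bt t ∩ (⇑e)^[t] ⁻¹' S) := by
    ext x
    simp only [Set.mem_inter_iff, Set.mem_preimage, Set.mem_iUnion, hBt, Set.mem_setOf_eq]
    constructor
    · rintro ⟨hxS, hxB⟩
      exact ⟨firstRetTime ⇑e B x, ⟨hxB, rfl⟩, by rwa [← firstRetMap]⟩
    · rintro ⟨t, ⟨hxB, ht⟩, hxS⟩
      exact ⟨by rwa [firstRetMap, ht], hxB⟩
  have hdisj : Pairwise (Function.onFun Disjoint fun t => Bt t ∩ (⇑e)^[t] ⁻¹' S) := by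
    intro t t' htt'
    refine Set.disjoint_left.mpr ?_
    rintro x ⟨⟨-, hx1⟩, -⟩ ⟨⟨-, hx2⟩, -⟩
    simp only [Set.mem_setOf_eq] at hx1 hx2
    exact htt' (hx1 ▸ hx2 ▸ rfl)
  rw [hdecomp, measure_iUnion hdisj (fun t => (hBtm t).inter ((he.iterate t) hS))]
  have hterm : ∀ t : ℕ, ν (Bt t ∩ (⇑e)^[t] ⁻¹' S) = ν (Ct t ∩ S) := by
    intro t
    rcases Nat.eq_zero_or_pos t with rfl | ht
    · have h1 : ν (Bt 0 ∩ (⇑e)^[0] ⁻¹' S) = 0 :=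
        measure_mono_null Set.inter_subset_left hnull1
      have h2 : ν (Ct 0 ∩ S) = 0 :=
        measure_mono_null Set.inter_subset_left hnull2
      rw [h1, h2]
    · have hpre : Bt t = (⇑e)^[t] ⁻¹' (Ct t) := by
        rw [hBt, hCt]
        have := Bt_eq_preimage e B (t := t) ht
        convert this using 1 <;> · ext x; simp [Set.mem_setOf_eq]
      have : Bt t ∩ (⇑e)^[t] ⁻¹' S = (⇑e)^[t] ⁻¹' (Ct t ∩ S) := by
        rw [hpre]
        simp only [hCt, Set.preimage_inter]
      rw [this]
      exact (hme.iterate t).measure_preimage ((hCtm t).inter hS).nullMeasurableSet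
  rw [tsum_congr hterm]
  have hcover : ⋃ t, (Ct t ∩ S) = B ∩ S := by
    ext y
    simp only [Set.mem_iUnion, Set.mem_inter_iff, hCt, Set.mem_setOf_eq]
    constructor
    · rintro ⟨t, ⟨hyB, -⟩, hyS⟩; exact ⟨hyB, hyS⟩
    · rintro ⟨hyB, hyS⟩; exact ⟨firstRetTime ⇑e.symm B y, ⟨hyB, rfl⟩, hyS⟩
  have hdisj2 : Pairwise (Function.onFun Disjoint fun t => Ct t ∩ S) := by
    intro t t' htt'
    refine Set.disjoint_left.mpr ?_
    rintro y ⟨⟨-, hy1⟩, -⟩ ⟨⟨-, hy2⟩, -⟩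
    simp only [Set.mem_setOf_eq] at hy1 hy2
    exact htt' (hy1 ▸ hy2 ▸ rfl)
  rw [← measure_iUnion hdisj2 (fun t => (hCtm t).inter hS), hcover, Set.inter_comm]

include he hesymm hB hme hnull1 hnull2 in
lemma map_retmap_iter_restrict (i : ℕ) :
    Measure.map ((firstRetMap ⇑e B)^[i]) (ν.restrict B) = ν.restrict B := by
  have hgB := measurable_firstRetMap he hB
  induction i with
  | zero => simp
  | succ i ih =>
    rw [Function.iterate_succ,
      ← Measure.map_map (hgB.iterate i) hgB,
      map_retmap_restrict he hesymm hB hme hnull1 hnull2, ih]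

end MeasPres

lemma zp_eq_iterate {p : ℤ} (hp : 0 ≤ p) : zp e p = (⇑e)^[p.toNat] := by
  funext x
  rw [← zp_natCast e p.toNat x]
  congr 1
  omega

lemma zp_eq_iterate_symm {p : ℤ} (hp : p < 0) : zp e p = (⇑e.symm)^[(-p).toNat] := by
  funext x
  rw [← zp_neg_natCast e (-p).toNat x]
  congr 1
  omega

lemma nonper_int {x : X} (hx : ∀ n : ℕ, 1 ≤ n → e^[n] x ≠ x) :
    ∀ c : ℤ, zp e c x = x → c = 0 := by
  have key : ∀ c : ℤ, 0 < c → zp e c x ≠ x := by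
    intro c hc hEq
    rw [zp_eq_iterate (le_of_lt hc)] at hEq
    exact hx c.toNat (by omega) hEq
  intro c hEq
  by_contra hne
  rcases lt_or_gt_of_ne hne with hneg | hpos
  · have : zp e (-c) x = x := by
      conv_lhs => rw [← hEq]
      rw [← zp_add]
      simp [zp_zero]
    exact key (-c) (by omega) this
  · exact key c hpos hEq

lemma Good.Y_zp {x : X} (h : Good e B N x) (hx : x ∈ B) (p : ℤ) :
    ∃ c : ℤ, Yf e B p x = zp e c x := by
  by_cases hp : 0 ≤ p
  · obtain ⟨-, -, c, -, hc⟩ := h.gB_iter hx p.toNat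
    rw [Yf, if_pos hp]
    exact ⟨c, by rw [hc, zp_natCast]⟩
  · obtain ⟨-, -, c, -, hc⟩ := h.gBi_iter hx (-p).toNat
    rw [Yf, if_neg hp]
    exact ⟨-(c:ℤ), by rw [hc, zp_neg_natCast]⟩

lemma precRel_trans {g' : X → X} {B' : Set X} {a b c : X}
    (h1 : precRel g' B' a b) (h2 : precRel g' B' b c) : precRel g' B' a c := by
  obtain ⟨n, hn⟩ := h1
  obtain ⟨n', hn'⟩ := h2
  exact ⟨n' + n, by rw [Function.iterate_add_apply, hn, hn']⟩

lemma simRel_trans {gt : X → X} {a b c : X}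
    (h1 : simRel gt a b) (h2 : simRel gt b c) : simRel gt a c := by
  obtain ⟨w, ⟨i, hi⟩, j, hj⟩ := h1
  obtain ⟨u, ⟨i', hi'⟩, j', hj'⟩ := h2
  refine ⟨gt^[i'] w, ⟨i' + i, by rw [Function.iterate_add_apply, hi]⟩,
    ⟨j + j', ?_⟩⟩
  rw [Function.iterate_add_apply, hj']
  calc gt^[j] u = gt^[j] (gt^[i'] b) := by rw [hi']
    _ = gt^[j + i'] b := by rw [← Function.iterate_add_apply]
    _ = gt^[i' + j] b := by rw [add_comm]
    _ = gt^[i'] (gt^[j] b) := by rw [Function.iterate_add_apply]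
    _ = gt^[i'] w := by rw [hj]

lemma Good.exists_pred {x : X} (h : Good e B N x) (hx : x ∈ B)
    (hmin : ¬ MinPt e B N x) :
    ∃ p : ℤ, p < 0 ∧ Yf e B p x ∈ B ∧
      precRel (⇑e) B (Yf e B p x) x ∧
      simRel (fun z => e^[N z] z) (Yf e B p x) x ∧ Yf e B p x ≠ x := by
  rw [MinPt] at hmin
  push_neg at hmin
  obtain ⟨m, k, l, hEq⟩ := hmin
  refine ⟨-((m:ℤ)+1), by omega, (h.Y_mem hx _).1, ?_, ?_, h.Y_ne hx (by omega)⟩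
  · refine ⟨m + 1, ?_⟩
    have h1 : ((m + 1 : ℕ) : ℤ) = (m:ℤ) + 1 := by push_cast; ring
    rw [← Yf_natCast (e := e) (B := B) (m+1), h1, ← h.Y_add hx (-((m:ℤ)+1)) ((m:ℤ)+1)]
    have h2 : ((m:ℤ)+1) + -((m:ℤ)+1) = 0 := by ring
    rw [h2, Yf_zero]
  · refine ⟨(fun z => e^[N z] z)^[k] (Yf e B (-((m:ℤ)+1)) x), ⟨k, rfl⟩, ⟨l, ?_⟩⟩
    rw [h.gt_iter_Y hx k _, hEq, ← h.gt_iter_Y hx l 0, Yf_zero]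

lemma Good.chain {x : X} (h : Good e B N x) (hx : x ∈ B)
    (hD : ∀ p : ℤ, Yf e B p x ∈ B → ¬ MinPt e B N (Yf e B p x)) :
    ∀ j : ℕ, ∃ q : ℤ, q ≤ -(j:ℤ) ∧ Yf e B q x ∈ B ∧
      precRel (⇑e) B (Yf e B q x) x ∧ simRel (fun z => e^[N z] z) (Yf e B q x) x := by
  intro j
  induction j with
  | zero =>
    refine ⟨0, by omega, by rwa [Yf_zero], ⟨0, by rw [Yf_zero]; rfl⟩, ?_⟩
    rw [Yf_zero]
    exact ⟨x, ⟨0, rfl⟩, ⟨0, rfl⟩⟩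
  | succ j ih =>
    obtain ⟨q, hq, hqB, hqPrec, hqSim⟩ := ih
    set z := Yf e B q x with hz
    have hzg : Good e B N z := (h.Y_mem hx q).2
    have hmin : ¬ MinPt e B N z := hD q hqB
    obtain ⟨p', hp', hp'B, hp'Prec, hp'Sim, -⟩ := hzg.exists_pred hqB hmin
    refine ⟨p' + q, by omega, ?_, ?_, ?_⟩
    · rw [h.Y_add hx q p', ← hz]
      exact hp'B
    · rw [h.Y_add hx q p', ← hz]
      exact precRel_trans hp'Prec hqPrec
    · rw [h.Y_add hx q p', ← hz]
      exact simRel_trans hp'Sim hqSim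

end GoodSec
end Stmt5

open Stmt5

/-- cf. [Sun], Proposition 4.2.  With `g` an invertible
bi-measurable measure-preserving transformation of the probability space
`(X, ν)`, a.e. point non-periodic, `B` of positive measure, `N ≥ 1` on `B`
measurable with `g̃ x = g^[N x] x ∈ B` for a.e. `x ∈ B` and `∫_B N dν < ∞`:
for ν-a.e. `x ∈ B` there is `x' ∈ B` with `x' ≾ x` and `x' ≠ x`; hence for
ν-a.e. `x ∈ B` there are infinitely many `x' ∈ B` with `x' ≾ x`. -/
theorem stmt_5 {X : Type*} [MeasurableSpace X]
    (ν : Measure X) [IsProbabilityMeasure ν]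
    (g : X ≃ᵐ X) (hg : MeasurePreserving g ν ν)
    (hper : ∀ᵐ x ∂ν, ∀ n : ℕ, 1 ≤ n → (⇑g)^[n] x ≠ x)
    (B : Set X) (hB : MeasurableSet B) (hBpos : 0 < ν B)
    (N : X → ℕ) (hNmeas : Measurable N) (hN1 : ∀ x ∈ B, 1 ≤ N x)
    (hret : ∀ᵐ x ∂ν, x ∈ B → (⇑g)^[N x] x ∈ B)
    (hint : ∫⁻ x in B, (N x : ℝ≥0∞) ∂ν < ⊤)
    (gt : X → X) (hgt : ∀ x, gt x = (⇑g)^[N x] x) :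
    ∀ᵐ x ∂ν, x ∈ B →
      (∃ x' ∈ B, precsim (⇑g) B gt x' x ∧ x' ≠ x) ∧
      {x' ∈ B | precsim (⇑g) B gt x' x}.Infinite := by
  classical
  set e : X ≃ X := g.toEquiv with he_def
  have he : Measurable (⇑e) := g.measurable
  have hes : Measurable (⇑e.symm) := g.symm.measurable
  have hme : MeasurePreserving (⇑e) ν ν := hg
  have hmes : MeasurePreserving (⇑e.symm) ν ν := MeasurePreserving.symm g hg
  -- Poincaré recurrence, forwards and backwards
  have hrecF : ∀ᵐ y ∂ν, y ∈ B → ∃ᶠ n in Filter.atTop, (⇑g)^[n] y ∈ B :=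
    hg.conservative.ae_mem_imp_frequently_image_mem hB.nullMeasurableSet
  have hrecB : ∀ᵐ y ∂ν, y ∈ B → ∃ᶠ n in Filter.atTop, (⇑g.symm)^[n] y ∈ B :=
    (MeasurePreserving.symm g hg).conservative.ae_mem_imp_frequently_image_mem
      hB.nullMeasurableSet
  have hnull1 : ν (B ∩ {x | firstRetTime ⇑e B x = 0}) = 0 := by
    rw [measure_eq_zero_iff_ae_notMem]
    filter_upwards [hrecF] with y hy
    rintro ⟨hyB, hy0⟩
    obtain ⟨n, hn1, hnB⟩ := Filter.frequently_atTop.mp (hy hyB) 1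
    rcases (frt_eq_iff (e := e) (B := B) y 0).mp hy0 with ⟨-, hnone⟩ | ⟨h1, -, -⟩
    · exact hnone n hn1 hnB
    · omega
  have hnull2 : ν (B ∩ {x | firstRetTime ⇑e.symm B x = 0}) = 0 := by
    rw [measure_eq_zero_iff_ae_notMem]
    filter_upwards [hrecB] with y hy
    rintro ⟨hyB, hy0⟩
    obtain ⟨n, hn1, hnB⟩ := Filter.frequently_atTop.mp (hy hyB) 1
    rcases (frt_eq_iff (e := e.symm) (B := B) y 0).mp hy0 with ⟨-, hnone⟩ | ⟨h1, -, -⟩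
    · exact hnone n hn1 hnB
    · omega
  -- goodness a.e.
  have hzpMP : ∀ p : ℤ, MeasurePreserving (zp e p) ν ν := by
    intro p
    by_cases hp : 0 ≤ p
    · rw [zp_eq_iterate hp]; exact hme.iterate p.toNat
    · rw [zp_eq_iterate_symm (by omega)]; exact hmes.iterate (-p).toNat
  have hbase : ∀ᵐ y ∂ν, y ∈ B →
      ((∃ t : ℕ, 1 ≤ t ∧ (⇑e)^[t] y ∈ B) ∧ (∃ t : ℕ, 1 ≤ t ∧ (⇑e.symm)^[t] y ∈ B) ∧
        (⇑e)^[N y] y ∈ B) := by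
    filter_upwards [hrecF, hrecB, hret] with y h1 h2 h3 hyB
    refine ⟨?_, ?_, h3 hyB⟩
    · obtain ⟨n, hn1, hnB⟩ := Filter.frequently_atTop.mp (h1 hyB) 1
      exact ⟨n, hn1, hnB⟩
    · obtain ⟨n, hn1, hnB⟩ := Filter.frequently_atTop.mp (h2 hyB) 1
      exact ⟨n, hn1, hnB⟩
  have hGood2 : ∀ᵐ x ∂ν, ∀ p : ℤ, zp e p x ∈ B →
      (∃ t : ℕ, 1 ≤ t ∧ zp e (p + t) x ∈ B) ∧
      (∃ t : ℕ, 1 ≤ t ∧ zp e (p - t) x ∈ B) ∧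
      zp e (p + N (zp e p x)) x ∈ B := by
    rw [MeasureTheory.ae_all_iff]
    intro p
    filter_upwards [(hzpMP p).quasiMeasurePreserving.ae hbase] with x hx hpB
    obtain ⟨⟨t, ht, htB⟩, ⟨t', ht', ht'B⟩, hNB⟩ := hx hpB
    refine ⟨⟨t, ht, ?_⟩, ⟨t', ht', ?_⟩, ?_⟩
    · have : zp e (p + (t:ℤ)) x = (⇑e)^[t] (zp e p x) := by
        rw [add_comm, zp_add, zp_natCast]
      rw [this]; exact htB
    · have : zp e (p - (t':ℤ)) x = (⇑e.symm)^[t'] (zp e p x) := by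
        rw [sub_eq_add_neg, add_comm, zp_add, zp_neg_natCast]
      rw [this]; exact ht'B
    · have : zp e (p + (N (zp e p x) : ℤ)) x = (⇑e)^[N (zp e p x)] (zp e p x) := by
        rw [add_comm, zp_add, zp_natCast]
      rw [this]; exact hNB
  have hGoodae : ∀ᵐ x ∂ν, Good e B N x := by
    filter_upwards [hper, hGood2] with x h1 h2
    exact ⟨nonper_int (fun n hn => h1 n hn), h2⟩
  -- the bad set D and its measure
  set D : Set X := B ∩ {z | MinPt e B N z} with hD_def
  have hDmeas : MeasurableSet D := hB.inter (measurable_MinPt he hes hB hNmeas)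
  have hDsub : D ⊆ B := Set.inter_subset_left
  have hgBmeas : Measurable (firstRetMap ⇑e B) := measurable_firstRetMap he hB
  have hmapiter : ∀ i : ℕ,
      Measure.map ((firstRetMap ⇑e B)^[i]) (ν.restrict B) = ν.restrict B :=
    fun i => map_retmap_iter_restrict he hes hB hme hnull1 hnull2 i
  set C := ∫⁻ x in B, (N x : ℝ≥0∞) ∂ν with hC_def
  have hind : ∀ i : ℕ,
      ∫⁻ x in B, D.indicator (1 : X → ℝ≥0∞) ((firstRetMap ⇑e B)^[i] x) ∂ν = ν D := by
    intro i
    rw [← lintegral_map (measurable_one.indicator hDmeas) (hgBmeas.iterate i), hmapiter i,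
      lintegral_indicator_one hDmeas, Measure.restrict_apply hDmeas,
      Set.inter_eq_self_of_subset_left hDsub]
  have hnfun_int : ∀ q : ℕ,
      ∫⁻ x in B, (nfun e B N ((firstRetMap ⇑e B)^[q] x) : ℝ≥0∞) ∂ν ≤ C := by
    intro q
    have hm : Measurable (fun y => (nfun e B N y : ℝ≥0∞)) :=
      measurable_from_top.comp (measurable_nfun he hB hNmeas)
    rw [← lintegral_map hm (hgBmeas.iterate q), hmapiter q]
    apply lintegral_mono
    intro y
    exact Nat.cast_le.mpr (nfun_le (e := e) (B := B) (N := N) y)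
  have hMain : ∀ M : ℕ, ((M+1 : ℕ) : ℝ≥0∞) * ν D ≤ 2 * C := by
    intro M
    set M' := 2*M+1 with hM'_def
    set F : X → ℝ≥0∞ := fun x => ∑ i ∈ Finset.range (M'+1),
      ((M'+1-i : ℕ) : ℝ≥0∞) * (if (firstRetMap ⇑e B)^[i] x ∈ D then 1 else 0) with hF_def
    set G : X → ℝ≥0∞ := fun x => ∑ q ∈ Finset.range (M'+1),
      ((nfun e B N ((firstRetMap ⇑e B)^[q] x) : ℕ) : ℝ≥0∞) with hG_def
    have hae : ∀ᵐ x ∂ν.restrict B, F x ≤ G x := by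
      filter_upwards [ae_restrict_mem hB, ae_restrict_of_ae hGoodae] with x hxB hxG
      have hw := window_bound (e := e) hxG hxB hN1 M'
      have hL : F x = ((∑ i ∈ Finset.range (M'+1),
          (M'+1-i) * (if MinPt e B N (Yf e B (i:ℤ) x) then 1 else 0) : ℕ) : ℝ≥0∞) := by
        rw [hF_def, Nat.cast_sum]
        apply Finset.sum_congr rfl
        intro i hi
        rw [Nat.cast_mul]
        congr 1
        have hY : (firstRetMap ⇑e B)^[i] x = Yf e B (i:ℤ) x := (Yf_natCast i x).symm
        by_cases hm : MinPt e B N (Yf e B (i:ℤ) x)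
        · have : (firstRetMap ⇑e B)^[i] x ∈ D := by
            rw [hY, hD_def]; exact ⟨(hxG.Y_mem hxB _).1, hm⟩
          simp [this, hm]
        · have : (firstRetMap ⇑e B)^[i] x ∉ D := by
            rw [hY, hD_def]
            rintro ⟨-, hmm⟩
            exact hm hmm
          simp [this, hm]
      have hR : G x = ((∑ q ∈ Finset.range (M'+1),
          nfun e B N (Yf e B (q:ℤ) x) : ℕ) : ℝ≥0∞) := by
        rw [hG_def, Nat.cast_sum]
        apply Finset.sum_congr rfl
        intro q hq
        rw [Yf_natCast]
      rw [hL, hR]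
      exact_mod_cast hw
    have hintFG : ∫⁻ x in B, F x ∂ν ≤ ∫⁻ x in B, G x ∂ν := lintegral_mono_ae hae
    have hFcalc : ∫⁻ x in B, F x ∂ν
        = ∑ i ∈ Finset.range (M'+1), ((M'+1-i : ℕ) : ℝ≥0∞) * ν D := by
      rw [hF_def, lintegral_finset_sum]
      · apply Finset.sum_congr rfl
        intro i hi
        have hmeasi : Measurable (fun x => (if (firstRetMap ⇑e B)^[i] x ∈ D then (1:ℝ≥0∞) else 0)) := by
          exact Measurable.ite ((hgBmeas.iterate i) hDmeas) measurable_const measurable_const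
        rw [lintegral_const_mul _ hmeasi]
        congr 1
        have : (fun x => (if (firstRetMap ⇑e B)^[i] x ∈ D then (1:ℝ≥0∞) else 0))
            = fun x => D.indicator (1 : X → ℝ≥0∞) ((firstRetMap ⇑e B)^[i] x) := by
          funext x
          rw [Set.indicator_apply]
          rfl
        rw [this]
        exact hind i
      · intro i hi
        exact (Measurable.ite ((hgBmeas.iterate i) hDmeas) measurable_const
          measurable_const).const_mul _
    have hGcalc : ∫⁻ x in B, G x ∂ν ≤ ((M'+1 : ℕ) : ℝ≥0∞) * C := by
      rw [hG_def, lintegral_finset_sum]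
      · calc ∑ q ∈ Finset.range (M'+1), ∫⁻ x in B,
            ((nfun e B N ((firstRetMap ⇑e B)^[q] x) : ℕ) : ℝ≥0∞) ∂ν
            ≤ ∑ _q ∈ Finset.range (M'+1), C := Finset.sum_le_sum fun q _ => hnfun_int q
          _ = ((M'+1 : ℕ) : ℝ≥0∞) * C := by
            rw [Finset.sum_const, Finset.card_range, nsmul_eq_mul]
      · intro q hq
        exact measurable_from_top.comp
          ((measurable_nfun he hB hNmeas).comp (hgBmeas.iterate q))
    have hlow : ((M+1 : ℕ) : ℝ≥0∞) * (((M+1 : ℕ) : ℝ≥0∞) * ν D)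
        ≤ ∑ i ∈ Finset.range (M'+1), ((M'+1-i : ℕ) : ℝ≥0∞) * ν D := by
      have hsub : Finset.range (M+1) ⊆ Finset.range (M'+1) := by
        apply Finset.range_subset_range.mpr
        omega
      calc ((M+1 : ℕ) : ℝ≥0∞) * (((M+1 : ℕ) : ℝ≥0∞) * ν D)
          = ∑ _i ∈ Finset.range (M+1), ((M+1 : ℕ) : ℝ≥0∞) * ν D := by
            rw [Finset.sum_const, Finset.card_range, nsmul_eq_mul]
        _ ≤ ∑ i ∈ Finset.range (M+1), ((M'+1-i : ℕ) : ℝ≥0∞) * ν D := by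
            apply Finset.sum_le_sum
            intro i hi
            have hii := Finset.mem_range.mp hi
            apply mul_le_mul_left
            apply Nat.cast_le.mpr
            omega
        _ ≤ ∑ i ∈ Finset.range (M'+1), ((M'+1-i : ℕ) : ℝ≥0∞) * ν D :=
            Finset.sum_le_sum_of_subset hsub
    have hfin : ((M+1 : ℕ) : ℝ≥0∞) * (((M+1 : ℕ) : ℝ≥0∞) * ν D)
        ≤ ((M+1 : ℕ) : ℝ≥0∞) * (2 * C) := by
      have h1 : ((M'+1 : ℕ) : ℝ≥0∞) * C = ((M+1 : ℕ) : ℝ≥0∞) * (2 * C) := by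
        rw [hM'_def]
        push_cast
        ring
      calc ((M+1 : ℕ) : ℝ≥0∞) * (((M+1 : ℕ) : ℝ≥0∞) * ν D)
          ≤ ∫⁻ x in B, F x ∂ν := by rw [hFcalc]; exact hlow
        _ ≤ ∫⁻ x in B, G x ∂ν := hintFG
        _ ≤ ((M'+1 : ℕ) : ℝ≥0∞) * C := hGcalc
        _ = ((M+1 : ℕ) : ℝ≥0∞) * (2 * C) := h1
    rwa [ENNReal.mul_le_mul_iff_right (by exact_mod_cast Nat.succ_ne_zero M)
      (ENNReal.natCast_ne_top _)] at hfin
  have hDzero : ν D = 0 := by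
    by_contra hne
    have hDne : ν D ≠ 0 := hne
    have hDtop : ν D ≠ ⊤ := measure_ne_top ν D
    have h2C : 2 * C ≠ ⊤ := ENNReal.mul_ne_top (by norm_num) hint.ne
    obtain ⟨M, hM⟩ := ENNReal.exists_nat_gt (ENNReal.div_lt_top h2C hDne).ne
    have h1 : 2 * C < ((M+1 : ℕ) : ℝ≥0∞) * ν D := by
      calc 2 * C = (2 * C / ν D) * ν D := (ENNReal.div_mul_cancel hDne hDtop).symm
        _ < ((M+1 : ℕ) : ℝ≥0∞) * ν D := by
            apply (ENNReal.mul_lt_mul_iff_left hDne hDtop).mpr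
            refine lt_of_lt_of_le hM ?_
            exact_mod_cast Nat.cast_le.mpr (Nat.le_succ M)
    exact absurd (hMain M) (not_le.mpr h1)
  have hDae : ∀ᵐ x ∂ν, ∀ p : ℤ, zp e p x ∉ D := by
    rw [MeasureTheory.ae_all_iff]
    intro p
    exact (hzpMP p).quasiMeasurePreserving.ae (measure_eq_zero_iff_ae_notMem.mp hDzero)
  -- conclusion
  filter_upwards [hGoodae, hDae] with x hxG hxD hxB
  have hgt_eq : gt = fun z => (⇑e)^[N z] z := by funext z; exact hgt z
  have hD' : ∀ p : ℤ, Yf e B p x ∈ B → ¬ MinPt e B N (Yf e B p x) := by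
    intro p hpB hmin
    obtain ⟨c, hc⟩ := hxG.Y_zp hxB p
    exact hxD c (by rw [← hc]; exact ⟨hpB, hmin⟩)
  have hchain := hxG.chain hxB hD'
  constructor
  · obtain ⟨q, hq, hqB, hqP, hqS⟩ := hchain 1
    refine ⟨Yf e B q x, hqB, ⟨hqP, ?_⟩, hxG.Y_ne hxB (by omega)⟩
    rw [hgt_eq]
    exact hqS
  · choose Q hQ1 hQ2 hQ3 hQ4 using hchain
    have hPinf : (Set.range Q).Infinite := by
      intro hfin
      obtain ⟨b, hb⟩ := hfin.bddBelow
      have hball : ∀ j : ℕ, b ≤ -(j:ℤ) := fun j => le_trans (hb (Set.mem_range_self j)) (hQ1 j)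
      have := hball (b.natAbs + 1)
      omega
    have hinj : Set.InjOn (fun q => Yf e B q x) (Set.range Q) :=
      fun a _ b _ hab => hxG.Y_inj hxB hab
    apply (hPinf.image hinj).mono
    rintro y ⟨q, ⟨j, rfl⟩, rfl⟩
    refine ⟨hQ2 j, hQ3 j, ?_⟩
    rw [hgt_eq]
    exact hQ4 j
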